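/- Let K be a field of characteristic zero, m a positive integer, and j < m. If a : ℕ → K is P-recursive, then the section sequence n ↦ a(m·n + j) is P-recursive. -/

import Mathlib

open Polynomial

/-- A sequence `a : ℕ → K` is P-recursive (holonomic) if there exist `d` and
polynomials `p 0, …, p d`, not all zero, with
`∑ i, p i (n) * a (n + i) = 0` for all `n`. -/
def IsPRecursive {K : Type*} [Field K] (a : ℕ → K) : Prop :=
  ∃ (d : ℕ) (p : Fin (d + 1) → Polynomial K),
    (∃ i, p i ≠ 0) ∧
    ∀ n : ℕ, ∑ i : Fin (d + 1), (p i).eval (n : K) * a (n + (i : ℕ)) = 0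

lemma comp_X_add_C_ne_zero' {K : Type*} [Field K] [CharZero K] {p : Polynomial K}
    (hp : p ≠ 0) (c : K) : p.comp (Polynomial.X + Polynomial.C c) ≠ 0 := by
  intro h
  apply hp
  apply Polynomial.funext
  intro r
  have := congrArg (Polynomial.eval (r - c)) h
  simpa [Polynomial.eval_comp] using this

lemma comp_C_mul_X_ne_zero' {K : Type*} [Field K] [CharZero K] {p : Polynomial K}
    (hp : p ≠ 0) {c : K} (hc : c ≠ 0) :
    p.comp (Polynomial.C c * Polynomial.X) ≠ 0 := by
  intro h
  apply hp
  apply Polynomial.funext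
  intro r
  have := congrArg (Polynomial.eval (r / c)) h
  simpa [Polynomial.eval_comp, mul_div_cancel₀ r hc] using this

/-- Reduce to a recurrence whose top coefficient is nonzero. -/
lemma reduce_lead {K : Type*} [Field K] (a : ℕ → K) :
    ∀ (d : ℕ) (p : Fin (d + 1) → Polynomial K), (∃ i, p i ≠ 0) →
    (∀ n : ℕ, ∑ i : Fin (d + 1), (p i).eval (n : K) * a (n + (i : ℕ)) = 0) →
    ∃ (D : ℕ) (q : Fin (D + 1) → Polynomial K), q (Fin.last D) ≠ 0 ∧
      ∀ n : ℕ, ∑ i : Fin (D + 1), (q i).eval (n : K) * a (n + (i : ℕ)) = 0 := by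
  intro d
  induction d with
  | zero =>
    rintro p ⟨i, hi⟩ hrec
    refine ⟨0, p, ?_, hrec⟩
    have h0 : i = Fin.last 0 := by
      apply Fin.ext
      omega
    rwa [h0] at hi
  | succ d ih =>
    intro p hex hrec
    by_cases hl : p (Fin.last (d + 1)) = 0
    · apply ih (fun i => p i.castSucc)
      · obtain ⟨i, hi⟩ := hex
        have hne : i ≠ Fin.last (d + 1) := by
          intro h; rw [h] at hi; exact hi hl
        obtain ⟨i', rfl⟩ := Fin.exists_castSucc_eq.mpr hne
        exact ⟨i', hi⟩
      · intro n
        have h := hrec n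
        rw [Fin.sum_univ_castSucc, hl] at h
        simpa using h
    · exact ⟨d + 1, p, hl, hrec⟩

/-- Unrolling the recurrence: every shift of `a` is a polynomial-coefficient
combination of the first `D` shifts, after multiplying by a nonzero polynomial. -/
lemma unroll {K : Type*} [Field K] [CharZero K] (a : ℕ → K) (D : ℕ)
    (p : Fin (D + 1) → Polynomial K) (hp : p (Fin.last D) ≠ 0)
    (hrec : ∀ n : ℕ, ∑ i : Fin (D + 1), (p i).eval (n : K) * a (n + (i : ℕ)) = 0)
    (s : ℕ) :
    ∃ (e : Polynomial K) (q : Fin D → Polynomial K), e ≠ 0 ∧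
      ∀ n : ℕ, e.eval (n : K) * a (n + s)
        = ∑ t : Fin D, (q t).eval (n : K) * a (n + (t : ℕ)) := by
  induction s using Nat.strong_induction_on with
  | _ s ih =>
  rcases lt_or_ge s D with hs | hs
  · refine ⟨1, fun t => if t = ⟨s, hs⟩ then 1 else 0, one_ne_zero, fun n => ?_⟩
    rw [Finset.sum_eq_single (⟨s, hs⟩ : Fin D)]
    · simp
    · intro b _ hb; simp [if_neg hb]
    · simp
  · have ihc : ∀ i : Fin D, ∃ (e : Polynomial K) (q : Fin D → Polynomial K), e ≠ 0 ∧
        ∀ n : ℕ, e.eval (n : K) * a (n + (s - D + (i : ℕ)))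
          = ∑ t : Fin D, (q t).eval (n : K) * a (n + (t : ℕ)) := by
      intro i
      have hi := i.isLt
      exact ih (s - D + (i : ℕ)) (by omega)
    choose e q he hq using ihc
    set c : K := ((s - D : ℕ) : K) with hc
    refine ⟨(p (Fin.last D)).comp (Polynomial.X + Polynomial.C c) * ∏ i, e i,
      fun t => -∑ i : Fin D,
        (p i.castSucc).comp (Polynomial.X + Polynomial.C c)
          * (∏ l ∈ Finset.univ.erase i, e l) * q i t,
      mul_ne_zero (comp_X_add_C_ne_zero' hp c)
        (Finset.prod_ne_zero_iff.mpr fun i _ => he i), fun n => ?_⟩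
    have hev : ∀ r : Polynomial K,
        (r.comp (Polynomial.X + Polynomial.C c)).eval (n : K)
          = r.eval ((n + (s - D) : ℕ) : K) := by
      intro r
      rw [Polynomial.eval_comp]
      congr 1
      push_cast
      simp
      exact hc
    have key := hrec (n + (s - D))
    rw [Fin.sum_univ_castSucc] at key
    simp only [Fin.val_last, Fin.coe_castSucc] at key
    have hD : n + (s - D) + D = n + s := by omega
    rw [hD] at key
    have hlead : (p (Fin.last D)).eval ((n + (s - D) : ℕ) : K) * a (n + s)
        = -∑ i : Fin D, (p i.castSucc).eval ((n + (s - D) : ℕ) : K)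
            * a (n + (s - D + (i : ℕ))) := by
      have h2 : ∀ x : Fin D, n + (s - D) + (x : ℕ) = n + (s - D + (x : ℕ)) :=
        fun x => by omega
      simp only [h2] at key
      linear_combination key
    calc ((p (Fin.last D)).comp (Polynomial.X + Polynomial.C c) * ∏ i, e i).eval (n : K)
          * a (n + s)
        = (∏ i, (e i).eval (n : K)) *
            ((p (Fin.last D)).eval ((n + (s - D) : ℕ) : K) * a (n + s)) := by
          rw [Polynomial.eval_mul, Polynomial.eval_prod, hev]; ring
      _ = (∏ i, (e i).eval (n : K)) *
            (-∑ i : Fin D, (p i.castSucc).eval ((n + (s - D) : ℕ) : K)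
              * a (n + (s - D + (i : ℕ)))) := by rw [hlead]
      _ = -∑ i : Fin D, (p i.castSucc).eval ((n + (s - D) : ℕ) : K)
            * ((∏ l ∈ Finset.univ.erase i, (e l).eval (n : K))
              * ((e i).eval (n : K) * a (n + (s - D + (i : ℕ))))) := by
          rw [mul_neg, Finset.mul_sum]
          congr 1
          apply Finset.sum_congr rfl
          intro i _
          rw [← Finset.mul_prod_erase _ (fun l => (e l).eval (n : K)) (Finset.mem_univ i)]
          ring
      _ = -∑ i : Fin D, (p i.castSucc).eval ((n + (s - D) : ℕ) : K)
            * ((∏ l ∈ Finset.univ.erase i, (e l).eval (n : K))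
              * (∑ t : Fin D, (q i t).eval (n : K) * a (n + (t : ℕ)))) := by
          congr 1
          apply Finset.sum_congr rfl
          intro i _
          rw [hq]
      _ = -∑ i : Fin D, ∑ t : Fin D, (p i.castSucc).eval ((n + (s - D) : ℕ) : K)
            * ((∏ l ∈ Finset.univ.erase i, (e l).eval (n : K))
              * ((q i t).eval (n : K) * a (n + (t : ℕ)))) := by
          congr 1
          apply Finset.sum_congr rfl
          intro i _
          rw [Finset.mul_sum, Finset.mul_sum]
      _ = -∑ t : Fin D, ∑ i : Fin D, (p i.castSucc).eval ((n + (s - D) : ℕ) : K)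
            * ((∏ l ∈ Finset.univ.erase i, (e l).eval (n : K))
              * ((q i t).eval (n : K) * a (n + (t : ℕ)))) := by
          rw [Finset.sum_comm]
      _ = ∑ t : Fin D,
            (-∑ i : Fin D, (p i.castSucc).comp (Polynomial.X + Polynomial.C c)
              * (∏ l ∈ Finset.univ.erase i, e l) * q i t).eval (n : K)
              * a (n + (t : ℕ)) := by
          rw [← Finset.sum_neg_distrib]
          apply Finset.sum_congr rfl
          intro t _
          simp only [Polynomial.eval_neg, Polynomial.eval_finset_sum,
            Polynomial.eval_mul, Polynomial.eval_prod, hev, neg_mul,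
            Finset.sum_mul]
          rw [← Finset.sum_neg_distrib, ← Finset.sum_neg_distrib]
          apply Finset.sum_congr rfl
          intro i _
          ring

set_option synthInstance.maxHeartbeats 1000000 in
theorem stmt6 {K : Type*} [Field K] [CharZero K] (m : ℕ) (hm : 0 < m)
    (j : ℕ) (hj : j < m) (a : ℕ → K) (ha : IsPRecursive a) :
    IsPRecursive (fun n => a (m * n + j)) := by
  classical
  obtain ⟨d0, p0, hex, hrec0⟩ := ha
  obtain ⟨D, p, hp, hrec⟩ := reduce_lead a d0 p0 hex hrec0
  have h1 : ∀ k : Fin (D + 1), ∃ (e : Polynomial K) (q : Fin D → Polynomial K), e ≠ 0 ∧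
      ∀ n : ℕ, e.eval (n : K) * a (n + (m * (k : ℕ) + j))
        = ∑ t : Fin D, (q t).eval (n : K) * a (n + (t : ℕ)) :=
    fun k => unroll a D p hp hrec (m * (k : ℕ) + j)
  choose E Q hE hQ using h1
  have hmK : (m : K) ≠ 0 := Nat.cast_ne_zero.mpr hm.ne'
  set Eh : Fin (D + 1) → Polynomial K :=
    fun k => (E k).comp (Polynomial.C (m : K) * Polynomial.X) with hEh
  set Qh : Fin (D + 1) → Fin D → Polynomial K :=
    fun k t => (Q k t).comp (Polynomial.C (m : K) * Polynomial.X) with hQh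
  have hEh0 : ∀ k, Eh k ≠ 0 := fun k => comp_C_mul_X_ne_zero' (hE k) hmK
  have hcomp : ∀ (r : Polynomial K) (n : ℕ),
      (r.comp (Polynomial.C (m : K) * Polynomial.X)).eval (n : K)
        = r.eval ((m * n : ℕ) : K) := by
    intro r n
    rw [Polynomial.eval_comp]
    congr 1
    push_cast
    simp
  have hsec : ∀ (k : Fin (D + 1)) (n : ℕ),
      (Eh k).eval (n : K) * a (m * (n + (k : ℕ)) + j)
        = ∑ t : Fin D, (Qh k t).eval (n : K) * a (m * n + (t : ℕ)) := by
    intro k n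
    have h := hQ k (m * n)
    have harg : m * n + (m * (k : ℕ) + j) = m * (n + (k : ℕ)) + j := by ring
    rw [harg] at h
    simpa [hEh, hQh, hcomp] using h
  set u : Fin (D + 1) → (Fin D → RatFunc K) := fun k t =>
    algebraMap (Polynomial K) (RatFunc K)
      (Qh k t * ∏ l ∈ Finset.univ.erase k, Eh l) with hu
  have hdep : ¬ LinearIndependent (RatFunc K) u := by
    intro h
    have hcard := h.fintype_card_le_finrank
    simp only [Module.finrank_pi, Fintype.card_fin] at hcard
    omega
  obtain ⟨g, hg0, k0, hk0⟩ := Fintype.not_linearIndependent_iff.mp hdep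
  obtain ⟨b, hb⟩ := IsLocalization.exist_integer_multiples
    (nonZeroDivisors (Polynomial K)) Finset.univ g
  have hbG : ∀ k : Fin (D + 1), ∃ Gk : Polynomial K,
      algebraMap (Polynomial K) (RatFunc K) Gk = (b : Polynomial K) • g k :=
    fun k => hb k (Finset.mem_univ k)
  choose G hG using hbG
  have hb0 : algebraMap (Polynomial K) (RatFunc K) (b : Polynomial K) ≠ 0 := by
    intro h
    exact nonZeroDivisors.ne_zero b.2 (RatFunc.algebraMap_injective K (by simpa using h))
  have hGk0 : G k0 ≠ 0 := by
    intro h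
    apply hk0
    have h1 := hG k0
    rw [h, map_zero, Algebra.smul_def] at h1
    exact (mul_eq_zero.mp h1.symm).resolve_left hb0
  have hrel : ∀ t : Fin D,
      ∑ k : Fin (D + 1), G k * (Qh k t * ∏ l ∈ Finset.univ.erase k, Eh l) = 0 := by
    intro t
    apply RatFunc.algebraMap_injective K
    rw [map_sum, map_zero]
    have hsum : ∑ k : Fin (D + 1), g k * u k t = 0 := by
      have h2 := congrFun hg0 t
      simpa using h2
    calc ∑ k : Fin (D + 1), algebraMap (Polynomial K) (RatFunc K)
            (G k * (Qh k t * ∏ l ∈ Finset.univ.erase k, Eh l))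
        = ∑ k : Fin (D + 1),
            algebraMap (Polynomial K) (RatFunc K) (b : Polynomial K) * (g k * u k t) := by
          apply Finset.sum_congr rfl
          intro k _
          rw [map_mul, hG k, Algebra.smul_def, hu]
          ring
      _ = algebraMap (Polynomial K) (RatFunc K) (b : Polynomial K)
            * ∑ k : Fin (D + 1), g k * u k t := by rw [Finset.mul_sum]
      _ = 0 := by rw [hsum, mul_zero]
  refine ⟨D, fun k => G k * ∏ l, Eh l,
    ⟨k0, mul_ne_zero hGk0 (Finset.prod_ne_zero_iff.mpr fun l _ => hEh0 l)⟩, fun n => ?_⟩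
  show ∑ k : Fin (D + 1), (G k * ∏ l, Eh l).eval (n : K) * a (m * (n + (k : ℕ)) + j) = 0
  have hsplit : ∀ k : Fin (D + 1),
      (∏ l, Eh l) = Eh k * ∏ l ∈ Finset.univ.erase k, Eh l :=
    fun k => (Finset.mul_prod_erase _ _ (Finset.mem_univ k)).symm
  calc ∑ k : Fin (D + 1), (G k * ∏ l, Eh l).eval (n : K) * a (m * (n + (k : ℕ)) + j)
      = ∑ k : Fin (D + 1), (G k).eval (n : K)
          * ((∏ l ∈ Finset.univ.erase k, Eh l).eval (n : K)
            * ((Eh k).eval (n : K) * a (m * (n + (k : ℕ)) + j))) := by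
        apply Finset.sum_congr rfl
        intro k _
        rw [hsplit k, Polynomial.eval_mul, Polynomial.eval_mul]
        ring
    _ = ∑ k : Fin (D + 1), (G k).eval (n : K)
          * ((∏ l ∈ Finset.univ.erase k, Eh l).eval (n : K)
            * (∑ t : Fin D, (Qh k t).eval (n : K) * a (m * n + (t : ℕ)))) := by
        apply Finset.sum_congr rfl
        intro k _
        rw [hsec k n]
    _ = ∑ k : Fin (D + 1), ∑ t : Fin D, (G k).eval (n : K)
          * ((∏ l ∈ Finset.univ.erase k, Eh l).eval (n : K)
            * ((Qh k t).eval (n : K) * a (m * n + (t : ℕ)))) := by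
        apply Finset.sum_congr rfl
        intro k _
        rw [Finset.mul_sum, Finset.mul_sum]
    _ = ∑ t : Fin D, ∑ k : Fin (D + 1), (G k).eval (n : K)
          * ((∏ l ∈ Finset.univ.erase k, Eh l).eval (n : K)
            * ((Qh k t).eval (n : K) * a (m * n + (t : ℕ)))) := by
        rw [Finset.sum_comm]
    _ = ∑ t : Fin D, (∑ k : Fin (D + 1),
          G k * (Qh k t * ∏ l ∈ Finset.univ.erase k, Eh l)).eval (n : K)
            * a (m * n + (t : ℕ)) := by
        apply Finset.sum_congr rfl
        intro t _
        rw [Polynomial.eval_finset_sum, Finset.sum_mul]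
        apply Finset.sum_congr rfl
        intro k _
        rw [Polynomial.eval_mul, Polynomial.eval_mul]
        ring
    _ = 0 := by
        simp [hrel]
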